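/- Suppose binary random variables $E_1, E_2, Y_1, Y_2$ with conditioning event $B$ of positive probability satisfy: $Y_2 = 0$ on $\{E_2 = 0\}$ and $Y_1 = 0$ on $\{E_1 = 0\}$ (exposure necessity), $Y_2 \perp E_1 \mid (Y_1, E_2, B)$ and $E_2 \perp E_1 \mid (Y_1, B)$, $P(E_1 = 0 \mid B) > 0$, and $P(Y_1 = 0 \mid B) > 0$. Then $P(Y_2 = 1 \mid Y_1 = 0, B) = P(Y_2 = 1 \mid E_1 = 0, B)$. -/

import Mathlib

open MeasureTheory ProbabilityTheory

/-- Core conditional-independence computation in Proposition 1: under exposure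
necessity and the homogeneity conditional independences (stated elementwise
for binary variables via conditional-measure factorizations), the interval-2
hazard among interval-1 survivors equals the interval-2 risk among those
unexposed during interval 1. -/
theorem homogeneity_hazard_identification
    {Ω : Type*} [MeasurableSpace Ω] (μ : Measure Ω) [IsProbabilityMeasure μ]
    (E1 E2 Y1 Y2 : Ω → ℝ)
    (hE1 : Measurable E1) (hE2 : Measurable E2)
    (hY1 : Measurable Y1) (hY2 : Measurable Y2)
    (hE1b : ∀ ω, E1 ω = 0 ∨ E1 ω = 1) (hE2b : ∀ ω, E2 ω = 0 ∨ E2 ω = 1)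
    (hY1b : ∀ ω, Y1 ω = 0 ∨ Y1 ω = 1) (hY2b : ∀ ω, Y2 ω = 0 ∨ Y2 ω = 1)
    (B : Set Ω) (hB : MeasurableSet B) (hBpos : 0 < μ B)
    -- exposure necessity
    (hnec2 : ∀ ω, E2 ω = 0 → Y2 ω = 0)
    (hnec1 : ∀ ω, E1 ω = 0 → Y1 ω = 0)
    -- Y2 ⟂ E1 ∣ (Y1, E2, B)
    (hci1 : ∀ y1 e2 : ℝ,
      (μ[|B ∩ {ω | Y1 ω = y1} ∩ {ω | E2 ω = e2}]) ({ω | Y2 ω = 1} ∩ {ω | E1 ω = 1})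
        = (μ[|B ∩ {ω | Y1 ω = y1} ∩ {ω | E2 ω = e2}]) {ω | Y2 ω = 1}
          * (μ[|B ∩ {ω | Y1 ω = y1} ∩ {ω | E2 ω = e2}]) {ω | E1 ω = 1})
    -- E2 ⟂ E1 ∣ (Y1, B)
    (hci2 : ∀ y1 : ℝ,
      (μ[|B ∩ {ω | Y1 ω = y1}]) ({ω | E2 ω = 1} ∩ {ω | E1 ω = 1})
        = (μ[|B ∩ {ω | Y1 ω = y1}]) {ω | E2 ω = 1}
          * (μ[|B ∩ {ω | Y1 ω = y1}]) {ω | E1 ω = 1})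
    -- positivity
    (hE1pos : 0 < (μ[|B]) {ω | E1 ω = 0})
    (hY1pos : 0 < (μ[|B]) {ω | Y1 ω = 0}) :
    (μ[|B ∩ {ω | Y1 ω = 0}]) {ω | Y2 ω = 1}
      = (μ[|B ∩ {ω | E1 ω = 0}]) {ω | Y2 ω = 1} := by
  have mE10 : MeasurableSet {ω | E1 ω = 0} := hE1 (measurableSet_singleton 0)
  have mE11 : MeasurableSet {ω | E1 ω = 1} := hE1 (measurableSet_singleton 1)
  have mE21 : MeasurableSet {ω | E2 ω = 1} := hE2 (measurableSet_singleton 1)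
  have mY10 : MeasurableSet {ω | Y1 ω = 0} := hY1 (measurableSet_singleton 0)
  have mY21 : MeasurableSet {ω | Y2 ω = 1} := hY2 (measurableSet_singleton 1)
  have hS : MeasurableSet (B ∩ {ω | Y1 ω = 0}) := hB.inter mY10
  have hC : MeasurableSet (B ∩ {ω | Y1 ω = 0} ∩ {ω | E2 ω = 1}) := hS.inter mE21
  have hTmeas : MeasurableSet (B ∩ {ω | E1 ω = 0}) := hB.inter mE10
  -- subset / set identities
  have hY2sub : {ω | Y2 ω = 1} ⊆ {ω | E2 ω = 1} := by
    intro ω h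
    rcases hE2b ω with h0 | h1
    · have h2 := hnec2 ω h0
      simp only [Set.mem_setOf_eq] at h
      rw [h] at h2; norm_num at h2
    · exact h1
  have hT : B ∩ {ω | E1 ω = 0} = B ∩ {ω | Y1 ω = 0} ∩ {ω | E1 ω = 0} := by
    ext ω
    constructor
    · rintro ⟨hb, he⟩; exact ⟨⟨hb, hnec1 ω he⟩, he⟩
    · rintro ⟨⟨hb, _⟩, he⟩; exact ⟨hb, he⟩
  have eqA : B ∩ {ω | Y1 ω = 0} ∩ {ω | E2 ω = 1} ∩ {ω | Y2 ω = 1}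
      = B ∩ {ω | Y1 ω = 0} ∩ {ω | Y2 ω = 1} := by
    ext ω
    constructor
    · rintro ⟨⟨hs, _⟩, hy⟩; exact ⟨hs, hy⟩
    · rintro ⟨hs, hy⟩; exact ⟨⟨hs, hY2sub hy⟩, hy⟩
  have eqa0 : B ∩ {ω | Y1 ω = 0} ∩ {ω | E1 ω = 0} ∩ {ω | Y2 ω = 1}
      = B ∩ {ω | Y1 ω = 0} ∩ {ω | E2 ω = 1} ∩ {ω | Y2 ω = 1} ∩ {ω | E1 ω = 0} := by
    rw [eqA]
    ext ω
    constructor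
    · rintro ⟨⟨hs, he⟩, hy⟩; exact ⟨⟨hs, hy⟩, he⟩
    · rintro ⟨⟨hs, hy⟩, he⟩; exact ⟨⟨hs, he⟩, hy⟩
  have hE1univ : {ω | E1 ω = 0} ∪ {ω | E1 ω = 1} = (Set.univ : Set Ω) := by
    ext ω; simpa using hE1b ω
  have hE1disj : ∀ X : Set Ω, Disjoint (X ∩ {ω | E1 ω = 0}) (X ∩ {ω | E1 ω = 1}) := by
    intro X
    rw [Set.disjoint_left]
    rintro ω ⟨_, h0⟩ ⟨_, h1⟩
    simp only [Set.mem_setOf_eq] at h0 h1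
    rw [h0] at h1; norm_num at h1
  have splitR : ∀ X : Set Ω, MeasurableSet X →
      (μ (X ∩ {ω | E1 ω = 0})).toReal + (μ (X ∩ {ω | E1 ω = 1})).toReal = (μ X).toReal := by
    intro X hX
    rw [← ENNReal.toReal_add (measure_ne_top μ _) (measure_ne_top μ _)]
    congr 1
    rw [← measure_union (hE1disj X) (hX.inter mE11), ← Set.inter_union_distrib_left,
      hE1univ, Set.inter_univ]
  -- positivity
  rw [cond_apply hB μ] at hY1pos hE1pos
  have hSpos : μ (B ∩ {ω | Y1 ω = 0}) ≠ 0 := by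
    intro h; rw [h, mul_zero] at hY1pos; exact lt_irrefl _ hY1pos
  have hTpos : μ (B ∩ {ω | E1 ω = 0}) ≠ 0 := by
    intro h; rw [h, mul_zero] at hE1pos; exact lt_irrefl _ hE1pos
  -- rewrite the goal via cond_apply
  rw [cond_apply hS μ, cond_apply hTmeas μ, hT, eqa0]
  by_cases hc : μ (B ∩ {ω | Y1 ω = 0} ∩ {ω | E2 ω = 1}) = 0
  · have z1 : μ (B ∩ {ω | Y1 ω = 0} ∩ {ω | Y2 ω = 1}) = 0 := by
      refine measure_mono_null ?_ hc
      rw [← eqA]; exact Set.inter_subset_left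
    have z2 : μ (B ∩ {ω | Y1 ω = 0} ∩ {ω | E2 ω = 1} ∩ {ω | Y2 ω = 1} ∩ {ω | E1 ω = 0}) = 0 := by
      refine measure_mono_null ?_ hc
      exact fun ω hω => hω.1.1
    rw [z1, z2, mul_zero, mul_zero]
  · -- main case: pass to real numbers
    have h1 := hci1 0 1
    simp only [cond_apply hC μ] at h1
    rw [← Set.inter_assoc (B ∩ {ω | Y1 ω = 0} ∩ {ω | E2 ω = 1})] at h1
    have h2 := hci2 0
    simp only [cond_apply hS μ] at h2
    rw [← Set.inter_assoc (B ∩ {ω | Y1 ω = 0})] at h2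
    have h1r := congrArg ENNReal.toReal h1
    have h2r := congrArg ENNReal.toReal h2
    simp only [ENNReal.toReal_mul, ENNReal.toReal_inv] at h1r h2r
    have hrc : (μ (B ∩ {ω | Y1 ω = 0} ∩ {ω | E2 ω = 1})).toReal ≠ 0 := by
      simp [ENNReal.toReal_ne_zero, hc, measure_ne_top μ _]
    have hrs : (μ (B ∩ {ω | Y1 ω = 0})).toReal ≠ 0 := by
      simp [ENNReal.toReal_ne_zero, hSpos, measure_ne_top μ _]
    have hre0 : (μ (B ∩ {ω | Y1 ω = 0} ∩ {ω | E1 ω = 0})).toReal ≠ 0 := by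
      rw [← hT]
      simp [ENNReal.toReal_ne_zero, hTpos, measure_ne_top μ _]
    have sA := splitR (B ∩ {ω | Y1 ω = 0} ∩ {ω | E2 ω = 1} ∩ {ω | Y2 ω = 1}) (hC.inter mY21)
    have sC := splitR (B ∩ {ω | Y1 ω = 0} ∩ {ω | E2 ω = 1}) hC
    have sS := splitR (B ∩ {ω | Y1 ω = 0}) hS
    -- convert the goal to reals
    rw [← ENNReal.toReal_eq_toReal_iff'
      (ENNReal.mul_ne_top (ENNReal.inv_ne_top.mpr hSpos) (measure_ne_top μ _))
      (ENNReal.mul_ne_top (ENNReal.inv_ne_top.mpr (by rw [← hT]; exact hTpos)) (measure_ne_top μ _))]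
    simp only [ENNReal.toReal_mul, ENNReal.toReal_inv]
    rw [← eqA]
    set ra0 := (μ (B ∩ {ω | Y1 ω = 0} ∩ {ω | E2 ω = 1} ∩ {ω | Y2 ω = 1} ∩ {ω | E1 ω = 0})).toReal
    set ra1 := (μ (B ∩ {ω | Y1 ω = 0} ∩ {ω | E2 ω = 1} ∩ {ω | Y2 ω = 1} ∩ {ω | E1 ω = 1})).toReal
    set rA := (μ (B ∩ {ω | Y1 ω = 0} ∩ {ω | E2 ω = 1} ∩ {ω | Y2 ω = 1})).toReal
    set rc0 := (μ (B ∩ {ω | Y1 ω = 0} ∩ {ω | E2 ω = 1} ∩ {ω | E1 ω = 0})).toReal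
    set rc1 := (μ (B ∩ {ω | Y1 ω = 0} ∩ {ω | E2 ω = 1} ∩ {ω | E1 ω = 1})).toReal
    set rc := (μ (B ∩ {ω | Y1 ω = 0} ∩ {ω | E2 ω = 1})).toReal
    set re0 := (μ (B ∩ {ω | Y1 ω = 0} ∩ {ω | E1 ω = 0})).toReal
    set re1 := (μ (B ∩ {ω | Y1 ω = 0} ∩ {ω | E1 ω = 1})).toReal
    set rs := (μ (B ∩ {ω | Y1 ω = 0})).toReal
    -- h1r : rc⁻¹ * ra1 = rc⁻¹ * rA * (rc⁻¹ * rc1)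
    -- h2r : rs⁻¹ * rc1 = rs⁻¹ * rc * (rs⁻¹ * re1)
    have H1 : ra1 * rc = rA * rc1 := by
      field_simp at h1r
      exact mul_right_cancel₀ hrc (by linear_combination rc * h1r)
    have H2 : rc1 * rs = rc * re1 := by
      field_simp at h2r
      exact mul_right_cancel₀ hrs (by linear_combination rs * h2r)
    have K1 : ra0 * rc = rA * rc0 := by linear_combination rc * sA - rA * sC - H1
    have K2 : rc0 * rs = rc * re0 := by linear_combination rs * sC - rc * sS - H2
    have key : ra0 * rs = rA * re0 :=
      mul_left_cancel₀ hrc (by linear_combination rs * K1 + rA * K2)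
    rw [inv_mul_eq_div, inv_mul_eq_div, div_eq_div_iff hrs hre0]
    linear_combination -key
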